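/- arXiv:2008.06529 — 4 statements merged into one kernel-verified Lean document; each statement's English description precedes it below -/
import Mathlib

section
/- For Bernoulli distributions P_b = Bernoulli(p), Q_b = Bernoulli(q) with 0 < q < p < 1 and α > 1, the function h(p,q;α) = (1/(α−1)) log(p^α q^{1−α} + (1−p)^α (1−q)^{1−α}) is strictly decreasing in q on (0, p), i.e., ∂h/∂q < 0 for all 0 < q < p < 1. -/
open Real

theorem stmt6 (α p q : ℝ) (hα : 1 < α) (hq : 0 < q) (hqp : q < p) (hp : p < 1) :
    deriv (fun t : ℝ => (α - 1)⁻¹ *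
        Real.log (p ^ α * t ^ (1 - α) + (1 - p) ^ α * (1 - t) ^ (1 - α))) q < 0 := by
  have hq1 : q < 1 := hqp.trans hp
  have hp0 : 0 < p := hq.trans hqp
  have h1q : (0:ℝ) < 1 - q := by linarith
  have h1p : (0:ℝ) < 1 - p := by linarith
  have hfpos : 0 < p ^ α * q ^ (1 - α) + (1 - p) ^ α * (1 - q) ^ (1 - α) := by positivity
  have h1 : HasDerivAt (fun t : ℝ => t ^ (1 - α)) ((1 - α) * q ^ (1 - α - 1)) q :=
    Real.hasDerivAt_rpow_const (Or.inl hq.ne')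
  have h2 : HasDerivAt (fun t : ℝ => (1 - t) ^ (1 - α))
      ((1 - α) * (1 - q) ^ (1 - α - 1) * (-1)) q := by
    have hinner : HasDerivAt (fun t : ℝ => 1 - t) (-1) q := (hasDerivAt_id q).const_sub 1
    exact (Real.hasDerivAt_rpow_const (p := 1 - α) (x := 1 - q) (Or.inl h1q.ne')).comp q hinner
  have hf : HasDerivAt
      (fun t : ℝ => p ^ α * t ^ (1 - α) + (1 - p) ^ α * (1 - t) ^ (1 - α))
      (p ^ α * ((1 - α) * q ^ (1 - α - 1)) +
        (1 - p) ^ α * ((1 - α) * (1 - q) ^ (1 - α - 1) * (-1))) q :=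
    (h1.const_mul _).add (h2.const_mul _)
  have hd : HasDerivAt (fun t : ℝ => (α - 1)⁻¹ *
      Real.log (p ^ α * t ^ (1 - α) + (1 - p) ^ α * (1 - t) ^ (1 - α)))
      ((α - 1)⁻¹ * ((p ^ α * ((1 - α) * q ^ (1 - α - 1)) +
        (1 - p) ^ α * ((1 - α) * (1 - q) ^ (1 - α - 1) * (-1))) /
        (p ^ α * q ^ (1 - α) + (1 - p) ^ α * (1 - q) ^ (1 - α)))) q :=
    (hf.log hfpos.ne').const_mul _
  rw [hd.deriv]
  -- key inequality
  have hkey : (1 - p) ^ α * (1 - q) ^ (1 - α - 1) < p ^ α * q ^ (1 - α - 1) := by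
    have he : (1:ℝ) - α - 1 = -α := by ring
    rw [he, Real.rpow_neg h1q.le, Real.rpow_neg hq.le, ← div_eq_mul_inv, ← div_eq_mul_inv,
      div_lt_div_iff₀ (by positivity) (by positivity), ← Real.mul_rpow h1p.le hq.le,
      ← Real.mul_rpow hp0.le h1q.le]
    exact Real.rpow_lt_rpow (by positivity) (by nlinarith) (by linarith)
  have hnum : p ^ α * ((1 - α) * q ^ (1 - α - 1)) +
      (1 - p) ^ α * ((1 - α) * (1 - q) ^ (1 - α - 1) * (-1)) < 0 := by
    have h1α : 1 - α < 0 := by linarith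
    nlinarith [hkey, Real.rpow_pos_of_pos hq (1 - α - 1), Real.rpow_pos_of_pos h1q (1 - α - 1)]
  have : (p ^ α * ((1 - α) * q ^ (1 - α - 1)) +
      (1 - p) ^ α * ((1 - α) * (1 - q) ^ (1 - α - 1) * (-1))) /
      (p ^ α * q ^ (1 - α) + (1 - p) ^ α * (1 - q) ^ (1 - α)) < 0 :=
    div_neg_of_neg_of_pos hnum hfpos
  have hα1 : (0:ℝ) < (α - 1)⁻¹ := inv_pos.mpr (by linarith)
  exact mul_neg_of_pos_of_neg hα1 this
end

section
/- For α > 1, ε ≥ 0, and δ ∈ (0,1): if αδ ≥ 1 then γ_α^ε(δ) = ε − log(1 − δ), and if 0 < αδ < 1 then γ_α^ε(δ) ≥ ε − (1/(α−1)) log(ζ_α/δ), where ζ_α = (1/α)(1 − 1/α)^{α−1}. -/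
open Real

lemma lemA {α t s : ℝ} (hα : 1 < α) (ht : 0 < t) (hts : t ≤ s) (hs1 : s < 1)
    (hs : s ≤ 1 - 1/α) : (1-t)*t^(α-1) ≤ (1-s)*s^(α-1) := by
  have hs0 : 0 < s := lt_of_lt_of_le ht hts
  have hα0 : (0:ℝ) < α := by linarith
  set v : ℝ := (s - t)/t with hv
  have hv0 : 0 ≤ v := div_nonneg (by linarith) ht.le
  have hsv : s = t * (1+v) := by rw [hv]; field_simp; ring
  have h1v : (0:ℝ) < 1 + v := by linarith
  have hbern : 1 + α*v ≤ (1+v)^α := one_add_mul_self_le_rpow_one_add (by linarith) hα.le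
  have h2 : (1+α*v)/(1+v) ≤ (1+v)^(α-1) := by
    rw [Real.rpow_sub h1v, Real.rpow_one]; gcongr
  have h3 : 1 ≤ α*(1-s) := by
    have h : 1/α ≤ 1 - s := by linarith
    calc (1:ℝ) = α * (1/α) := by field_simp
    _ ≤ α*(1-s) := by gcongr
  have key : (1-t)*(1+v) ≤ (1-s)*(1+α*v) := by nlinarith
  have h4 : (1-t) ≤ (1-s)*(1+v)^(α-1) := by
    have h5 : (1-t) ≤ (1-s)*((1+α*v)/(1+v)) := by
      rw [mul_div_assoc', le_div_iff₀ h1v]; linarith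
    calc (1-t) ≤ (1-s)*((1+α*v)/(1+v)) := h5
    _ ≤ (1-s)*(1+v)^(α-1) := mul_le_mul_of_nonneg_left h2 (by linarith)
  calc (1-t)*t^(α-1) ≤ ((1-s)*(1+v)^(α-1)) * t^(α-1) :=
        mul_le_mul_of_nonneg_right h4 (Real.rpow_nonneg ht.le _)
  _ = (1-s)*s^(α-1) := by
      rw [hsv, Real.mul_rpow ht.le h1v.le]; ring

lemma lemB {α t : ℝ} (hα : 1 < α) (ht : 0 < t) (ht1 : t < 1) :
    (1-t)*t^(α-1) ≤ α⁻¹ * (1 - α⁻¹)^(α-1) := by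
  have hα0 : (0:ℝ) < α := by linarith
  have hα1 : (0:ℝ) < α - 1 := by linarith
  have hp1 : (0:ℝ) ≤ t*(α/(α-1)) := by positivity
  have hp2 : (0:ℝ) ≤ (1-t)*α := by nlinarith
  have hgm := Real.geom_mean_le_arith_mean2_weighted
    (by positivity : (0:ℝ) ≤ (α-1)/α) (by positivity : (0:ℝ) ≤ α⁻¹) hp1 hp2
    (by field_simp; ring)
  have hsum : (α-1)/α * (t*(α/(α-1))) + α⁻¹ * ((1-t)*α) = 1 := by field_simp; ring
  rw [hsum] at hgm
  have hlhs0 : (0:ℝ) ≤ (t*(α/(α-1)))^((α-1)/α) * ((1-t)*α)^(α⁻¹) := by positivity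
  have hpow := Real.rpow_le_rpow hlhs0 hgm hα0.le
  rw [Real.one_rpow] at hpow
  have hexp : ((t*(α/(α-1)))^((α-1)/α) * ((1-t)*α)^(α⁻¹))^α
      = (t*(α/(α-1)))^(α-1) * ((1-t)*α) := by
    rw [Real.mul_rpow (Real.rpow_nonneg hp1 _) (Real.rpow_nonneg hp2 _),
      ← Real.rpow_mul hp1, ← Real.rpow_mul hp2,
      div_mul_cancel₀ _ hα0.ne', inv_mul_cancel₀ hα0.ne', Real.rpow_one]
  rw [hexp, Real.mul_rpow ht.le (by positivity)] at hpow
  set A : ℝ := (α/(α-1))^(α-1) with hA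
  have hApos : 0 < A := Real.rpow_pos_of_pos (by positivity) _
  have hAinv : (1 - α⁻¹)^(α-1) = A⁻¹ := by
    rw [hA, ← Real.inv_rpow (by positivity)]
    congr 1
    field_simp
  rw [hAinv]
  rw [show α⁻¹ * A⁻¹ = 1/(α*A) by field_simp, le_div_iff₀ (by positivity)]
  nlinarith [Real.rpow_nonneg ht.le (α-1)]

lemma lemLB {α δ p B : ℝ} (hδ0 : 0 < δ) (hp : δ < p) (hB0 : 0 < B)
    (hB : (1-(p-δ)/p) * ((p-δ)/p)^(α-1) ≤ B) :
    δ/B ≤ p^α * (p-δ)^(1-α) := by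
  have hp0 : 0 < p := hδ0.trans hp
  have hpd : 0 < p - δ := sub_pos.2 hp
  have h1t : 1-(p-δ)/p = δ/p := by field_simp; ring
  have htpow : ((p-δ)/p)^(α-1) = (p-δ)^(α-1)/p^(α-1) := Real.div_rpow hpd.le hp0.le (α-1)
  have e1 : (p-δ)^(1-α) * (p-δ)^(α-1) = 1 := by rw [← Real.rpow_add hpd]; norm_num
  have e2 : p * p^(α-1) = p^α := by
    have h := Real.rpow_add hp0 1 (α-1)
    rw [Real.rpow_one] at h
    rw [← h]; norm_num
  have hφ0 : 0 < (1-(p-δ)/p) * ((p-δ)/p)^(α-1) := by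
    rw [h1t]
    exact mul_pos (by positivity) (Real.rpow_pos_of_pos (by positivity) _)
  have hid : (p^α * (p-δ)^(1-α)) * ((1-(p-δ)/p) * ((p-δ)/p)^(α-1)) = δ := by
    rw [h1t, htpow]
    calc p^α*(p-δ)^(1-α) * ((δ/p) * ((p-δ)^(α-1)/p^(α-1)))
        = δ * (p^α/(p*p^(α-1))) * ((p-δ)^(1-α)*(p-δ)^(α-1)) := by ring
      _ = δ := by
          rw [e1, e2, div_self (ne_of_gt (Real.rpow_pos_of_pos hp0 α)), mul_one, mul_one]
  have hg : p^α * (p-δ)^(1-α) = δ / ((1-(p-δ)/p) * ((p-δ)/p)^(α-1)) :=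
    (eq_div_iff (ne_of_gt hφ0)).2 hid
  rw [hg]
  exact div_le_div_of_nonneg_left hδ0.le hφ0 hB

/-- The optimal RDP parameter corresponding to an `(ε, δ)`-DP constraint, via the
binary reduction: `γ_α^ε(δ) = ε + (1/(α−1)) log min_{p∈(δ,1)} [p^α(p−δ)^{1−α} + (1−p)^α(e^ε−p+δ)^{1−α}]`. -/
noncomputable def gammaOpt (α ε δ : ℝ) : ℝ :=
  ε + (α - 1)⁻¹ * Real.log (sInf
    ((fun p : ℝ => p ^ α * (p - δ) ^ (1 - α)
        + (1 - p) ^ α * (Real.exp ε - p + δ) ^ (1 - α)) '' Set.Ioo δ 1))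

theorem stmt8 (α ε δ : ℝ) (hα : 1 < α) (hε : 0 ≤ ε) (hδ : δ ∈ Set.Ioo (0:ℝ) 1) :
    (1 ≤ α * δ → gammaOpt α ε δ = ε - Real.log (1 - δ))
    ∧ (α * δ < 1 →
        ε - (α - 1)⁻¹ * Real.log ((α⁻¹ * (1 - α⁻¹) ^ (α - 1)) / δ) ≤ gammaOpt α ε δ) := by
  obtain ⟨hδ0, hδ1⟩ := hδ
  have hα0 : (0:ℝ) < α := by linarith
  have hα1 : (0:ℝ) < α - 1 := by linarith
  set f : ℝ → ℝ := fun p : ℝ => p ^ α * (p - δ) ^ (1 - α)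
        + (1 - p) ^ α * (Real.exp ε - p + δ) ^ (1 - α) with hf
  set S : Set ℝ := f '' Set.Ioo δ 1 with hS
  have hne : S.Nonempty := ⟨f ((δ+1)/2), ⟨(δ+1)/2, ⟨by linarith, by linarith⟩, rfl⟩⟩
  have hexp1 : (1:ℝ) ≤ Real.exp ε := by
    have := Real.add_one_le_exp ε; linarith
  have h2nd : ∀ p ∈ Set.Ioo δ 1, 0 ≤ (1 - p) ^ α * (Real.exp ε - p + δ) ^ (1 - α) := by
    intro p hp
    exact mul_nonneg (Real.rpow_nonneg (by linarith [hp.2]) _)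
      (Real.rpow_nonneg (by linarith [hp.2]) _)
  constructor
  · -- case 1 ≤ α δ
    intro h1
    set m : ℝ := (1-δ)^(1-α) with hm
    have hmpos : 0 < m := Real.rpow_pos_of_pos (by linarith) _
    have hBpos : 0 < δ*(1-δ)^(α-1) :=
      mul_pos hδ0 (Real.rpow_pos_of_pos (by linarith) _)
    have hmB : m = δ/(δ*(1-δ)^(α-1)) := by
      rw [hm, show (1-α) = -(α-1) by ring,
        Real.rpow_neg (by linarith : (0:ℝ) ≤ 1-δ)]
      rw [eq_div_iff (ne_of_gt hBpos)]
      field_simp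
    have hml : ∀ x ∈ S, m ≤ x := by
      rintro x ⟨p, hp, rfl⟩
      have hp0 : 0 < p := hδ0.trans hp.1
      have ht0 : 0 < (p-δ)/p := div_pos (sub_pos.2 hp.1) hp0
      have hts : (p-δ)/p ≤ 1-δ := by
        rw [div_le_iff₀ hp0]
        nlinarith [hp.2]
      have hsarg : 1 - δ ≤ 1 - 1/α := by
        have : 1/α ≤ δ := by
          rw [div_le_iff₀ hα0]
          linarith [h1, mul_comm α δ]
        linarith
      have hA := lemA hα ht0 hts (by linarith) hsarg
      have hlb := lemLB hδ0 hp.1 hBpos (by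
        calc (1-(p-δ)/p) * ((p-δ)/p)^(α-1) ≤ (1-(1-δ))*(1-δ)^(α-1) := hA
        _ = δ*(1-δ)^(α-1) := by ring_nf)
      rw [← hmB] at hlb
      have := h2nd p hp
      simp only [hf]
      linarith
    have hbdd : BddBelow S := ⟨m, fun x hx => hml x hx⟩
    have hinf_ge : m ≤ sInf S := le_csInf hne hml
    have hinf_le : sInf S ≤ m := by
      by_contra hcon
      push_neg at hcon
      have c1 : ContinuousAt (fun p:ℝ => p^α) 1 :=
        Real.continuousAt_rpow_const 1 α (Or.inl one_ne_zero)
      have c2 : ContinuousAt (fun p:ℝ => (p-δ)^(1-α)) 1 :=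
        (continuousAt_id.sub continuousAt_const).rpow_const
          (Or.inl (by intro h; simp only [Pi.sub_apply, Pi.add_apply, id_eq] at h; nlinarith))
      have c3 : ContinuousAt (fun p:ℝ => (1-p)^α) 1 :=
        (continuousAt_const.sub continuousAt_id).rpow_const (Or.inr hα0.le)
      have c4 : ContinuousAt (fun p:ℝ => (Real.exp ε - p + δ)^(1-α)) 1 :=
        ((continuousAt_const.sub continuousAt_id).add continuousAt_const).rpow_const
          (Or.inl (by intro h; simp only [Pi.sub_apply, Pi.add_apply, id_eq] at h; nlinarith))
      have hc : ContinuousAt f 1 := (c1.mul c2).add (c3.mul c4)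
      have hf1 : f 1 = m := by
        simp only [hf, hm]
        rw [Real.one_rpow, sub_self, Real.zero_rpow (ne_of_gt hα0)]
        ring
      have htend : Filter.Tendsto f (nhdsWithin 1 (Set.Iio 1)) (nhds m) := by
        rw [← hf1]
        exact hc.tendsto.mono_left nhdsWithin_le_nhds
      have hev : ∀ᶠ p in nhdsWithin (1:ℝ) (Set.Iio 1), f p < sInf S :=
        htend.eventually_lt_const hcon
      have hmem : Set.Ioo δ 1 ∈ nhdsWithin (1:ℝ) (Set.Iio 1) :=
        Ioo_mem_nhdsLT_of_mem ⟨hδ1, le_refl 1⟩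
      obtain ⟨p, hfp, hpm⟩ := (hev.and hmem).exists
      have := csInf_le hbdd (⟨p, hpm, rfl⟩ : f p ∈ S)
      linarith
    have heq : sInf S = m := le_antisymm hinf_le hinf_ge
    show ε + (α-1)⁻¹ * Real.log (sInf S) = ε - Real.log (1-δ)
    rw [heq, hm, Real.log_rpow (by linarith)]
    field_simp
    ring
  · -- case α δ < 1
    intro _
    set Z : ℝ := α⁻¹ * (1 - α⁻¹)^(α-1) with hZ
    have hZpos : 0 < Z := by
      have : (0:ℝ) < 1 - α⁻¹ := by
        rw [sub_pos, inv_lt_one_iff₀]; right; exact hα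
      exact mul_pos (by positivity) (Real.rpow_pos_of_pos this _)
    have hml : ∀ x ∈ S, δ/Z ≤ x := by
      rintro x ⟨p, hp, rfl⟩
      have hp0 : 0 < p := hδ0.trans hp.1
      have ht0 : 0 < (p-δ)/p := div_pos (sub_pos.2 hp.1) hp0
      have ht1 : (p-δ)/p < 1 := by
        rw [div_lt_one hp0]; linarith
      have hlb := lemLB hδ0 hp.1 hZpos (lemB hα ht0 ht1)
      have := h2nd p hp
      simp only [hf]
      linarith
    have hmpos : 0 < δ/Z := div_pos hδ0 hZpos
    have hinf_ge : δ/Z ≤ sInf S := le_csInf hne hml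
    have hlog : Real.log (δ/Z) ≤ Real.log (sInf S) :=
      Real.log_le_log hmpos hinf_ge
    have hneg : -Real.log (Z/δ) = Real.log (δ/Z) := by
      rw [← Real.log_inv, inv_div]
    show ε - (α-1)⁻¹ * Real.log (Z/δ) ≤ ε + (α-1)⁻¹ * Real.log (sInf S)
    have hpos : (0:ℝ) ≤ (α-1)⁻¹ := by positivity
    nlinarith [mul_le_mul_of_nonneg_left (hneg ▸ hlog) hpos]
end

section
/- For α > 1, ε ≥ 0, and 0 < αδ < 1: γ_α^ε(δ) ≥ ε + (1/(α−1)) log( (e^ε − αδ)((δ−1)/(δ−e^ε))^α + αδ ), with equality if and only if δ = 0. -/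
open Real


lemma tangent_aux {α : ℝ} (hα : 1 < α) {x y c : ℝ} (hx : 0 ≤ x) (hy : 0 < y) (hc : 0 < c) :
    α * c ^ (α - 1) * x + (1 - α) * c ^ α * y ≤ x ^ α * y ^ (1 - α) := by
  have hcy : 0 < c * y := mul_pos hc hy
  set s : ℝ := x / (c * y) - 1 with hs_def
  have hs : -1 ≤ s := by
    have : 0 ≤ x / (c * y) := div_nonneg hx hcy.le
    simp [hs_def]; linarith
  have hB := one_add_mul_self_le_rpow_one_add hs hα.le
  have h1 : 1 + s = x / (c * y) := by ring
  rw [h1, Real.div_rpow hx hcy.le] at hB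
  have hcyα : 0 < (c * y) ^ α := rpow_pos_of_pos hcy α
  have hB2 : (1 + α * s) * (c * y) ^ α ≤ x ^ α := (le_div_iff₀ hcyα).mp hB
  have hmul : (c * y) ^ α = c ^ α * y ^ α := Real.mul_rpow hc.le hy.le
  have hYY : y ^ α * y ^ (1 - α) = y := by
    rw [← Real.rpow_add hy]; simp
  have hcc : c ^ α = c ^ (α - 1) * c := by
    rw [← Real.rpow_add_one hc.ne' (α - 1)]; ring_nf
  have hy1α : 0 < y ^ (1 - α) := rpow_pos_of_pos hy _
  have hstep : (1 + α * s) * (c * y) ^ α * y ^ (1 - α) ≤ x ^ α * y ^ (1 - α) :=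
    mul_le_mul_of_nonneg_right hB2 hy1α.le
  refine le_trans (le_of_eq ?_) hstep
  have e1 : (1 + α * s) * (c * y) ^ α * y ^ (1 - α)
      = (1 + α * s) * c ^ α * (y ^ α * y ^ (1 - α)) := by rw [hmul]; ring
  rw [e1, hYY, hs_def, hcc]
  field_simp
  ring

/-- the first term of `f` is at least `p + (α-1)δ + κ (p-δ)`. -/
lemma first_term {α δ : ℝ} (hα : 1 < α) (hδ : 0 ≤ δ) (hδ1 : δ < 1) {p : ℝ}
    (hp : δ < p) (hp1 : p < 1) :
    p + (α - 1) * δ + ((1 - δ)⁻¹ ^ α - 1 - α * (δ / (1 - δ))) * (p - δ)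
      ≤ p ^ α * (p - δ) ^ (1 - α) := by
  have hq : 0 < p - δ := by linarith
  have hp0 : 0 < p := lt_of_le_of_lt hδ hp
  have h1δ : 0 < 1 - δ := by linarith
  set t₀ : ℝ := (1 - δ)⁻¹ with ht₀_def
  have ht₀ : 0 < t₀ := inv_pos.mpr h1δ
  set t : ℝ := p / (p - δ) with ht_def
  have ht : 0 < t := div_pos hp0 hq
  -- identity : p^α (p-δ)^(1-α) = (p-δ) * t^α
  have hiden : p ^ α * (p - δ) ^ (1 - α) = (p - δ) * t ^ α := by
    rw [ht_def, Real.div_rpow hp0.le hq.le]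
    rw [show (1 : ℝ) - α = 1 + (-α) by ring, Real.rpow_one_add' hq.le (by intro h; nlinarith),
      Real.rpow_neg hq.le]
    field_simp
  -- tangent at t₀
  have htan := tangent_aux hα ht.le one_pos ht₀
  simp only [Real.one_rpow, mul_one] at htan
  have hA : 1 ≤ t₀ ^ (α - 1) := Real.one_le_rpow (by rw [ht₀_def]; rw [le_inv_comm₀] <;> nlinarith) (by linarith)
  have hb : t₀ ^ α = t₀ ^ (α - 1) * t₀ := by
    rw [← Real.rpow_add_one ht₀.ne' (α - 1)]; ring_nf
  have htt₀ : t₀ ≤ t := by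
    rw [ht₀_def, ht_def, inv_eq_one_div, div_le_div_iff₀ h1δ hq]
    nlinarith
  -- hence t^α ≥ t₀^α + α (t - t₀)
  have hint : 0 ≤ α * ((t₀ ^ (α - 1) - 1) * (t - t₀)) :=
    mul_nonneg (by linarith) (mul_nonneg (by linarith) (by linarith))
  have key : t₀ ^ α + α * (t - t₀) ≤ t ^ α := by nlinarith [htan, hint, hb]
  have key2 : (p - δ) * (t₀ ^ α + α * (t - t₀)) ≤ (p - δ) * t ^ α :=
    mul_le_mul_of_nonneg_left key hq.le
  rw [hiden]
  refine le_trans (le_of_eq ?_) key2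
  rw [ht_def, ht₀_def]
  field_simp
  ring

lemma coef_le_one {α c : ℝ} (hα : 1 < α) (hc : 0 < c) :
    α * c ^ (α - 1) + (1 - α) * c ^ α ≤ 1 := by
  have := tangent_aux hα (zero_le_one) (zero_lt_one) hc
  simpa using this


lemma pointwise_bound {α ε δ : ℝ} (hα : 1 < α) (hε : 0 ≤ ε) (hδ : 0 ≤ δ) (hδ1 : δ < 1)
    {p : ℝ} (hp : δ < p) (hp1 : p < 1) :
    (Real.exp ε - α * δ) * ((1 - δ) / (Real.exp ε - δ)) ^ α + α * δ
        + ((1 - δ)⁻¹ ^ α - 1 - α * (δ / (1 - δ))) * (p - δ)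
      ≤ p ^ α * (p - δ) ^ (1 - α) + (1 - p) ^ α * (Real.exp ε - p + δ) ^ (1 - α) := by
  set E := Real.exp ε with hE_def
  have hE : 1 ≤ E := Real.one_le_exp hε
  have hEδ : 0 < E - δ := by linarith
  have h1δ : 0 < 1 - δ := by linarith
  set c : ℝ := (1 - δ) / (E - δ) with hc_def
  have hc : 0 < c := div_pos h1δ hEδ
  set a : ℝ := c ^ (α - 1) with ha_def
  set b : ℝ := c ^ α with hb_def
  have hab : b = a * c := by
    rw [hb_def, ha_def, ← Real.rpow_add_one hc.ne' (α - 1)]; ring_nf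
  have hrel : b * (E - δ) = a * (1 - δ) := by
    rw [hab, hc_def, mul_assoc, div_mul_cancel₀ _ hEδ.ne']
  have h1 := first_term hα hδ hδ1 hp hp1
  have h2 := tangent_aux hα (by linarith : (0:ℝ) ≤ 1 - p) (by linarith : 0 < E - p + δ) hc
  have hK : α * a + (1 - α) * b ≤ 1 := coef_le_one hα hc
  have hKp : 0 ≤ (p - δ) * (1 - α * a + (α - 1) * b) :=
    mul_nonneg (by linarith) (by linarith)
  have hgap : p + (α - 1) * δ + (α * a * (1 - p) + (1 - α) * b * (E - p + δ))
      = (E - α * δ) * b + α * δ + (p - δ) * (1 - α * a + (α - 1) * b) := by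
    linear_combination (-α) * hrel
  linarith [h1, h2]


lemma kappa_nonneg {α δ : ℝ} (hα : 1 < α) (hδ : 0 ≤ δ) (hδ1 : δ < 1) :
    0 ≤ (1 - δ)⁻¹ ^ α - 1 - α * (δ / (1 - δ)) := by
  have h1δ : 0 < 1 - δ := by linarith
  have hs : (0:ℝ) ≤ δ / (1 - δ) := div_nonneg hδ h1δ.le
  have hB := one_add_mul_self_le_rpow_one_add (by linarith : (-1:ℝ) ≤ δ / (1 - δ)) hα.le
  have hid : 1 + δ / (1 - δ) = (1 - δ)⁻¹ := by field_simp; ring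
  rw [hid] at hB
  linarith

lemma kappa_pos {α δ : ℝ} (hα : 1 < α) (hδ : 0 < δ) (hδ1 : δ < 1) :
    0 < (1 - δ)⁻¹ ^ α - 1 - α * (δ / (1 - δ)) := by
  have h1δ : 0 < 1 - δ := by linarith
  have hs : (0:ℝ) < δ / (1 - δ) := div_pos hδ h1δ
  have hB := one_add_mul_self_lt_rpow_one_add (by linarith : (-1:ℝ) ≤ δ / (1 - δ)) hs.ne' hα
  have hid : 1 + δ / (1 - δ) = (1 - δ)⁻¹ := by field_simp; ring
  rw [hid] at hB
  linarith

theorem stmt9 (α ε δ : ℝ) (hα : 1 < α) (hε : 0 ≤ ε) (hδ : 0 ≤ δ) (hαδ : α * δ < 1) :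
    (ε + (α - 1)⁻¹ * Real.log
        ((Real.exp ε - α * δ) * ((δ - 1) / (δ - Real.exp ε)) ^ α + α * δ) ≤ gammaOpt α ε δ)
    ∧ (gammaOpt α ε δ
        = ε + (α - 1)⁻¹ * Real.log
            ((Real.exp ε - α * δ) * ((δ - 1) / (δ - Real.exp ε)) ^ α + α * δ)
      ↔ δ = 0) := by
  have hδ1 : δ < 1 := by nlinarith
  have hα1 : (0:ℝ) < α - 1 := by linarith
  have hE : 1 ≤ Real.exp ε := Real.one_le_exp hε
  have hE0 : 0 < Real.exp ε := Real.exp_pos ε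
  have hEδ : 0 < Real.exp ε - δ := by linarith
  have h1δ : 0 < 1 - δ := by linarith
  have hdiv : (δ - 1) / (δ - Real.exp ε) = (1 - δ) / (Real.exp ε - δ) := by
    rw [← neg_div_neg_eq]; ring_nf
  have hc : 0 < (1 - δ) / (Real.exp ε - δ) := div_pos h1δ hEδ
  have hbpos : 0 < ((1 - δ) / (Real.exp ε - δ)) ^ α := rpow_pos_of_pos hc α
  have hEαδ : 0 < Real.exp ε - α * δ := by linarith
  set B : ℝ := (Real.exp ε - α * δ) * ((1 - δ) / (Real.exp ε - δ)) ^ α + α * δ with hB_def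
  have hBpos : 0 < B := by
    rw [hB_def]
    nlinarith [mul_pos hEαδ hbpos, mul_nonneg (by linarith : (0:ℝ) ≤ α) hδ]
  set f : ℝ → ℝ := fun p : ℝ => p ^ α * (p - δ) ^ (1 - α)
        + (1 - p) ^ α * (Real.exp ε - p + δ) ^ (1 - α) with hf_def
  set S : Set ℝ := f '' Set.Ioo δ 1 with hS_def
  have hmem : ∀ p ∈ Set.Ioo δ 1, f p ∈ S := fun p hp => Set.mem_image_of_mem f hp
  have hSne : S.Nonempty := ⟨f ((δ+1)/2), hmem _ ⟨by linarith, by linarith⟩⟩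
  set κ : ℝ := (1 - δ)⁻¹ ^ α - 1 - α * (δ / (1 - δ)) with hκ_def
  have hκ0 : 0 ≤ κ := kappa_nonneg hα hδ hδ1
  have hpb : ∀ p ∈ Set.Ioo δ 1, B + κ * (p - δ) ≤ f p := by
    rintro p ⟨hp1, hp2⟩
    have h := pointwise_bound hα hε hδ hδ1 hp1 hp2
    calc B + κ * (p - δ)
        = (Real.exp ε - α * δ) * ((1 - δ) / (Real.exp ε - δ)) ^ α + α * δ
            + ((1 - δ)⁻¹ ^ α - 1 - α * (δ / (1 - δ))) * (p - δ) := by rw [hB_def, hκ_def]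
      _ ≤ p ^ α * (p - δ) ^ (1 - α) + (1 - p) ^ α * (Real.exp ε - p + δ) ^ (1 - α) := h
      _ = f p := rfl
  have hlow : ∀ s ∈ S, B ≤ s := by
    rintro s ⟨p, hp, rfl⟩
    have h := hpb p hp
    have hnn : 0 ≤ κ * (p - δ) := mul_nonneg hκ0 (by linarith [hp.1])
    linarith
  have hbdd : BddBelow S := ⟨B, hlow⟩
  have hBle : B ≤ sInf S := le_csInf hSne hlow
  have hgamma : gammaOpt α ε δ = ε + (α - 1)⁻¹ * Real.log (sInf S) := rfl
  have hinner : (Real.exp ε - α * δ) * ((δ - 1) / (δ - Real.exp ε)) ^ α + α * δ = B := by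
    rw [hdiv, hB_def]
  constructor
  · rw [hinner, hgamma]
    have hlog : Real.log B ≤ Real.log (sInf S) := Real.log_le_log hBpos hBle
    have := mul_le_mul_of_nonneg_left hlog (inv_pos.mpr hα1).le
    linarith
  constructor
  · intro heq
    by_contra hδ0
    have hδpos : 0 < δ := lt_of_le_of_ne hδ (Ne.symm hδ0)
    have hκpos : 0 < κ := kappa_pos hα hδpos hδ1
    have hδα : 0 < δ ^ α := rpow_pos_of_pos hδpos α
    set r₁ : ℝ := (δ ^ α / (B + 1)) ^ (α - 1)⁻¹ with hr₁_def
    have hr₁ : 0 < r₁ := rpow_pos_of_pos (by positivity) _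
    set r : ℝ := min ((1 - δ)/2) r₁ with hr_def
    have hr : 0 < r := lt_min (by linarith) hr₁
    have hrr₁ : r ≤ r₁ := min_le_right _ _
    have hr₁val : δ ^ α * r₁ ^ (1 - α) = B + 1 := by
      rw [hr₁_def, ← Real.rpow_mul (by positivity : (0:ℝ) ≤ δ ^ α / (B + 1))]
      rw [show (α - 1)⁻¹ * (1 - α) = -1 by
        rw [show (1 - α) = -(α - 1) by ring, mul_neg, inv_mul_cancel₀ hα1.ne']]
      rw [Real.rpow_neg_one, inv_div]
      field_simp
    have hstrict : ∀ s ∈ S, B + min 1 (κ * r) ≤ s := by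
      rintro s ⟨p, hp, rfl⟩
      obtain ⟨hp1, hp2⟩ := hp
      rcases le_or_gt p (δ + r) with hcase | hcase
      · have hq : 0 < p - δ := by linarith
        have h2nn : 0 ≤ (1 - p) ^ α * (Real.exp ε - p + δ) ^ (1 - α) :=
          mul_nonneg (Real.rpow_nonneg (by linarith) _) (Real.rpow_nonneg (by linarith) _)
        have hδp : δ ^ α ≤ p ^ α := Real.rpow_le_rpow hδ hp1.le (by linarith)
        have hpr : r₁ ^ (1 - α) ≤ (p - δ) ^ (1 - α) :=
          Real.rpow_le_rpow_of_nonpos hq (by linarith) (by linarith)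
        have hmul : δ ^ α * r₁ ^ (1 - α) ≤ p ^ α * (p - δ) ^ (1 - α) :=
          mul_le_mul hδp hpr (Real.rpow_nonneg (by linarith) _) (Real.rpow_nonneg (by linarith) _)
        have hBf : B + 1 ≤ f p := by
          rw [← hr₁val]
          calc δ ^ α * r₁ ^ (1 - α) ≤ p ^ α * (p - δ) ^ (1 - α) := hmul
            _ ≤ f p := by rw [hf_def]; simp only []; linarith
        have : min 1 (κ * r) ≤ 1 := min_le_left _ _
        linarith
      · have h := hpb p ⟨hp1, hp2⟩
        have h1 : κ * r ≤ κ * (p - δ) := mul_le_mul_of_nonneg_left (by linarith) hκpos.le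
        have h2 : min 1 (κ * r) ≤ κ * r := min_le_right _ _
        linarith
    have hsinf : B + min 1 (κ * r) ≤ sInf S := le_csInf hSne hstrict
    have hmin : 0 < min 1 (κ * r) := lt_min one_pos (mul_pos hκpos hr)
    have hlt : Real.log B < Real.log (sInf S) := Real.log_lt_log hBpos (by linarith)
    rw [hgamma, hinner] at heq
    have h2 : (α - 1)⁻¹ * Real.log B < (α - 1)⁻¹ * Real.log (sInf S) :=
      mul_lt_mul_of_pos_left hlt (inv_pos.mpr hα1)
    linarith [heq.le, heq.ge]
  · intro h0
    subst h0
    rw [hgamma, hinner]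
    have hupper : sInf S ≤ B := by
      have hcont : ContinuousAt
          (fun p : ℝ => p + (1 - p) ^ α * (Real.exp ε - p) ^ (1 - α)) 0 := by
        apply ContinuousAt.add continuousAt_id
        apply ContinuousAt.mul
        · exact (continuousAt_const.sub continuousAt_id).rpow_const (Or.inl (by norm_num))
        · refine (continuousAt_const.sub continuousAt_id).rpow_const (Or.inl ?_)
          simpa using hE0.ne'
      have hval : (0:ℝ) + (1 - 0) ^ α * (Real.exp ε - 0) ^ (1 - α) = B := by
        have e1 : ((1:ℝ) - 0)/(Real.exp ε - 0) = (Real.exp ε)⁻¹ := by norm_num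
        rw [hB_def, e1, mul_zero, add_zero, sub_zero, sub_zero, zero_add, Real.one_rpow,
          one_mul, Real.inv_rpow hE0.le, Real.rpow_sub hE0, Real.rpow_one, div_eq_mul_inv]
      have htend : Filter.Tendsto (fun p : ℝ => p + (1 - p) ^ α * (Real.exp ε - p) ^ (1 - α))
          (nhdsWithin 0 (Set.Ioi 0)) (nhds B) := by
        have h := hcont.tendsto
        beta_reduce at h
        rw [hval] at h
        exact h.mono_left nhdsWithin_le_nhds
      have hev : ∀ᶠ p in nhdsWithin (0:ℝ) (Set.Ioi 0),
          sInf S ≤ p + (1 - p) ^ α * (Real.exp ε - p) ^ (1 - α) := by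
        filter_upwards [Ioo_mem_nhdsGT_of_mem (by norm_num : (0:ℝ) ∈ Set.Ico 0 1)] with p hp
        have hfp : f p = p + (1 - p) ^ α * (Real.exp ε - p) ^ (1 - α) := by
          rw [hf_def]
          simp only [sub_zero, add_zero]
          congr 1
          rw [← Real.rpow_add hp.1]
          norm_num
        rw [← hfp]
        exact csInf_le hbdd (hmem p hp)
      exact ge_of_tendsto htend hev
    rw [le_antisymm hupper hBle]
end

section
/- For α > 1, ε ≥ 0, δ ∈ [0,1), and p ∈ (δ,1), the function δ ↦ p^α (p−δ)^{1−α} + (1−p)^α (e^ε − p + δ)^{1−α} is convex in δ, and hence bounded below by its first-order Taylor expansion at δ = 0: p + (α−1)δ + ((1−p)/(e^ε−p))^α (e^ε − p − (α−1)δ). -/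
open Real

/-- Bernoulli-type inequality for nonpositive exponents. -/
lemma bern_neg_aux {t q : ℝ} (ht : 0 < t) (hq : q ≤ 0) : 1 + q * (t - 1) ≤ t ^ q := by
  rw [Real.rpow_def_of_pos ht]
  have h1 : q * (t - 1) ≤ q * Real.log t :=
    mul_le_mul_of_nonpos_left (Real.log_le_sub_one_of_pos ht) hq
  linarith [Real.add_one_le_exp (Real.log t * q)]

/-- Tangent line inequality for `x ↦ x ^ q`, `q ≤ 0`, on the positive reals. -/
lemma tangent_le_aux {a x q : ℝ} (ha : 0 < a) (hx : 0 < x) (hq : q ≤ 0) :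
    a ^ q + q * a ^ (q - 1) * (x - a) ≤ x ^ q := by
  have h := bern_neg_aux (div_pos hx ha) hq
  have haq : (0:ℝ) < a ^ q := Real.rpow_pos_of_pos ha q
  have key : a ^ q * (1 + q * (x / a - 1)) ≤ x ^ q := by
    have h2 := mul_le_mul_of_nonneg_left h haq.le
    rwa [Real.div_rpow hx.le ha.le, mul_div_cancel₀ _ haq.ne'] at h2
  have e1 : a ^ (q - 1) = a ^ q / a := Real.rpow_sub_one ha.ne' q
  refine le_trans (le_of_eq ?_) key
  rw [e1]
  field_simp

/-- Midpoint-type convexity inequality for `x ↦ x ^ q`, `q ≤ 0`. -/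
lemma comb_aux {u v a b q : ℝ} (hu : 0 < u) (hv : 0 < v) (ha : 0 ≤ a) (hb : 0 ≤ b)
    (hab : a + b = 1) (hq : q ≤ 0) : (a * u + b * v) ^ q ≤ a * u ^ q + b * v ^ q := by
  have hm : 0 < a * u + b * v := by
    rcases ha.lt_or_eq with h | h
    · exact add_pos_of_pos_of_nonneg (mul_pos h hu) (mul_nonneg hb hv.le)
    · have hb1 : b = 1 := by linarith
      simpa [← h, hb1] using hv
  have t1 := tangent_le_aux hm hu hq
  have t2 := tangent_le_aux hm hv hq
  have key := add_le_add (mul_le_mul_of_nonneg_left t1 ha) (mul_le_mul_of_nonneg_left t2 hb)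
  set A := (a * u + b * v) ^ q with hA
  set B := (a * u + b * v) ^ (q - 1) with hB
  refine le_trans (le_of_eq ?_) key
  linear_combination (q * B * (a * u + b * v) - A) * hab

theorem stmt10 (α ε p : ℝ) (hα : 1 < α) (hε : 0 ≤ ε) (hp : p ∈ Set.Ioo (0:ℝ) 1) :
    ConvexOn ℝ (Set.Ico 0 p)
      (fun δ : ℝ => p ^ α * (p - δ) ^ (1 - α)
        + (1 - p) ^ α * (Real.exp ε - p + δ) ^ (1 - α))
    ∧ ∀ δ ∈ Set.Ico (0:ℝ) p,
        p + (α - 1) * δ + ((1 - p) / (Real.exp ε - p)) ^ α * (Real.exp ε - p - (α - 1) * δ)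
          ≤ p ^ α * (p - δ) ^ (1 - α) + (1 - p) ^ α * (Real.exp ε - p + δ) ^ (1 - α) := by
  obtain ⟨hp0, hp1⟩ := hp
  have hE1 : 1 ≤ Real.exp ε := Real.one_le_exp hε
  have hEp : 0 < Real.exp ε - p := by linarith
  have hq : 1 - α ≤ 0 := by linarith
  have hpα : (0:ℝ) ≤ p ^ α := (Real.rpow_pos_of_pos hp0 α).le
  have h1pα : (0:ℝ) ≤ (1 - p) ^ α := (Real.rpow_pos_of_pos (by linarith) α).le
  constructor
  · refine ⟨convex_Ico _ _, fun x hx y hy a b ha hb hab => ?_⟩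
    obtain ⟨hx0, hxp⟩ := hx
    obtain ⟨hy0, hyp⟩ := hy
    simp only [smul_eq_mul]
    have hpx : 0 < p - x := by linarith
    have hpy : 0 < p - y := by linarith
    have hex : 0 < Real.exp ε - p + x := by linarith
    have hey : 0 < Real.exp ε - p + y := by linarith
    have e1 : p - (a * x + b * y) = a * (p - x) + b * (p - y) := by
      linear_combination (-p) * hab
    have e2 : Real.exp ε - p + (a * x + b * y)
        = a * (Real.exp ε - p + x) + b * (Real.exp ε - p + y) := by
      linear_combination (-(Real.exp ε - p)) * hab
    calc p ^ α * (p - (a * x + b * y)) ^ (1 - α)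
          + (1 - p) ^ α * (Real.exp ε - p + (a * x + b * y)) ^ (1 - α)
        = p ^ α * (a * (p - x) + b * (p - y)) ^ (1 - α)
          + (1 - p) ^ α * (a * (Real.exp ε - p + x) + b * (Real.exp ε - p + y)) ^ (1 - α) := by
          rw [e1, e2]
      _ ≤ p ^ α * (a * (p - x) ^ (1 - α) + b * (p - y) ^ (1 - α))
          + (1 - p) ^ α * (a * (Real.exp ε - p + x) ^ (1 - α)
              + b * (Real.exp ε - p + y) ^ (1 - α)) :=
          add_le_add (mul_le_mul_of_nonneg_left (comb_aux hpx hpy ha hb hab hq) hpα)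
            (mul_le_mul_of_nonneg_left (comb_aux hex hey ha hb hab hq) h1pα)
      _ = a * (p ^ α * (p - x) ^ (1 - α) + (1 - p) ^ α * (Real.exp ε - p + x) ^ (1 - α))
          + b * (p ^ α * (p - y) ^ (1 - α)
              + (1 - p) ^ α * (Real.exp ε - p + y) ^ (1 - α)) := by ring
  · intro δ hδ
    obtain ⟨hδ0, hδp⟩ := hδ
    have h1 : 0 < p - δ := by linarith
    have h2 : 0 < Real.exp ε - p + δ := by linarith
    have t1 := tangent_le_aux hp0 h1 hq
    have t2 := tangent_le_aux hEp h2 hq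
    have hA : p ^ α * p ^ (1 - α) = p := by
      rw [← Real.rpow_add hp0, show α + (1 - α) = (1:ℝ) by ring, Real.rpow_one]
    have hB : p ^ α * p ^ (1 - α - 1) = 1 := by
      rw [← Real.rpow_add hp0, show α + (1 - α - 1) = (0:ℝ) by ring, Real.rpow_zero]
    have hD : (1 - p) ^ α * (Real.exp ε - p) ^ (1 - α - 1)
        = ((1 - p) / (Real.exp ε - p)) ^ α := by
      rw [Real.div_rpow (by linarith) hEp.le, show (1 - α - 1 : ℝ) = -α by ring,
        Real.rpow_neg hEp.le, div_eq_mul_inv]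
    have hC : (1 - p) ^ α * (Real.exp ε - p) ^ (1 - α)
        = ((1 - p) / (Real.exp ε - p)) ^ α * (Real.exp ε - p) := by
      rw [show (1 - α : ℝ) = 1 - α - 1 + 1 by ring,
        Real.rpow_add_one hEp.ne' (1 - α - 1)]
      linear_combination (Real.exp ε - p) * hD
    have e1 : p ^ α * (p ^ (1 - α) + (1 - α) * p ^ (1 - α - 1) * ((p - δ) - p))
        = p + (α - 1) * δ := by
      linear_combination hA + ((1 - α) * (-δ)) * hB
    have e2 : (1 - p) ^ α * ((Real.exp ε - p) ^ (1 - α)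
          + (1 - α) * (Real.exp ε - p) ^ (1 - α - 1) * ((Real.exp ε - p + δ) - (Real.exp ε - p)))
        = ((1 - p) / (Real.exp ε - p)) ^ α * (Real.exp ε - p - (α - 1) * δ) := by
      linear_combination hC + ((1 - α) * δ) * hD
    calc p + (α - 1) * δ + ((1 - p) / (Real.exp ε - p)) ^ α * (Real.exp ε - p - (α - 1) * δ)
        = p ^ α * (p ^ (1 - α) + (1 - α) * p ^ (1 - α - 1) * ((p - δ) - p))
          + (1 - p) ^ α * ((Real.exp ε - p) ^ (1 - α)
            + (1 - α) * (Real.exp ε - p) ^ (1 - α - 1)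
              * ((Real.exp ε - p + δ) - (Real.exp ε - p))) := by rw [e1, e2]
      _ ≤ p ^ α * (p - δ) ^ (1 - α) + (1 - p) ^ α * (Real.exp ε - p + δ) ^ (1 - α) :=
          add_le_add (mul_le_mul_of_nonneg_left t1 hpα) (mul_le_mul_of_nonneg_left t2 h1pα)
end
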